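/- Let X and Y be locally compact Hausdorff spaces, μ a Radon measure over X, and f a μ-measurable function defined μ-almost everywhere on X with values in P(Y) (where P(Y) carries the Borel σ-algebra of the weak topology). Then for every continuous function ψ : X×Y → ℝ with compact support, the function x ↦ ∫ ψ(x,y) d f(x)(y) is μ-measurable. -/
import Mathlib


open MeasureTheory Topology

noncomputable section

/-- The set of probability Radon measures over `Y`. -/
def ProbRadon (Y : Type*) [TopologicalSpace Y] [MeasurableSpace Y] : Type _ :=
  {ν : Measure Y // IsProbabilityMeasure ν ∧ ν.Regular}

/-- The weak topology on `ProbRadon Y`: the initial topology induced by the maps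
`ν ↦ ∫ k dν` corresponding to continuous functions `k : Y → ℝ` with compact support. -/
instance (Y : Type*) [TopologicalSpace Y] [MeasurableSpace Y] :
    TopologicalSpace (ProbRadon Y) :=
  ⨅ k : {k : Y → ℝ // Continuous k ∧ HasCompactSupport k},
    TopologicalSpace.induced (fun ν : ProbRadon Y => ∫ y, k.1 y ∂ν.1) inferInstance

/-- The Borel σ-algebra of the weak topology on `ProbRadon Y`. -/
instance (Y : Type*) [TopologicalSpace Y] [MeasurableSpace Y] :
    MeasurableSpace (ProbRadon Y) := borel (ProbRadon Y)

instance probRadonBorel (Y : Type*) [TopologicalSpace Y] [MeasurableSpace Y] :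
    BorelSpace (ProbRadon Y) := ⟨rfl⟩

/-- Evaluation against a fixed compactly supported continuous function is continuous
in the weak topology. -/
theorem probRadon_continuous_eval {Y : Type*} [TopologicalSpace Y] [MeasurableSpace Y]
    (k : Y → ℝ) (hk : Continuous k) (hkc : HasCompactSupport k) :
    Continuous fun ν : ProbRadon Y => ∫ y, k y ∂ν.1 :=
  continuous_iInf_dom (i := ⟨k, hk, hkc⟩) continuous_induced_dom

/-- Let `X` and `Y` be locally compact Hausdorff spaces, `μ` a Radon
measure over `X`, and `f` a `μ`-measurable function defined `μ`-almost everywhere on `X`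
with values in `P(Y)` (with the Borel σ-algebra of the weak topology).  Then for every
continuous `ψ : X × Y → ℝ` with compact support, the function
`x ↦ ∫ ψ(x, y) d f(x)(y)` is `μ`-measurable. -/
theorem youngFunction_integral_aemeasurable
    (X Y : Type*) [TopologicalSpace X] [LocallyCompactSpace X] [T2Space X]
    [MeasurableSpace X] [BorelSpace X]
    [TopologicalSpace Y] [LocallyCompactSpace Y] [T2Space Y]
    [MeasurableSpace Y] [BorelSpace Y]
    (μ : Measure X) (hμ : μ.Regular)
    (f : X → ProbRadon Y) (hf : AEMeasurable f μ)
    (ψ : X × Y → ℝ) (hψ : Continuous ψ) (hψc : HasCompactSupport ψ) :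
    AEMeasurable (fun x => ∫ y, ψ (x, y) ∂(f x).1) μ := by
  classical
  rcases isEmpty_or_nonempty X with hX | hX
  · exact (measurable_of_empty _).aemeasurable
  obtain ⟨f', hf'meas, hff'⟩ := hf
  -- suffices to show the version with the measurable representative is measurable
  suffices hmeas : Measurable fun x => ∫ y, ψ (x, y) ∂(f' x).1 by
    refine ⟨_, hmeas, ?_⟩
    filter_upwards [hff'] with x hx
    simp only [hx]
  -- the compact set containing all the `y`-supports
  set L : Set Y := Prod.snd '' tsupport ψ with hLdef
  have hL : IsCompact L := hψc.image continuous_snd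
  haveI : CompactSpace L := isCompact_iff_compactSpace.mp hL
  -- for each x, the slice has compact support
  have hmemL : ∀ x y, ψ (x, y) ≠ 0 → y ∈ L := by
    intro x y hne
    exact ⟨(x, y), subset_tsupport ψ hne, rfl⟩
  have hcomp : ∀ x : X, HasCompactSupport fun y => ψ (x, y) := by
    intro x
    refine HasCompactSupport.intro hL fun y hy => ?_
    by_contra hne
    exact hy (hmemL x y hne)
  have hcont : ∀ x : X, Continuous fun y => ψ (x, y) := fun x =>
    hψ.comp (Continuous.prodMk_right x)
  -- the map x ↦ ψ(x, ·)|_L as a continuous map into C(L, ℝ)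
  set v : C(X, C(L, ℝ)) :=
    ContinuousMap.curry ⟨fun p : X × L => ψ (p.1, p.2.1),
      hψ.comp (continuous_fst.prodMk (continuous_subtype_val.comp continuous_snd))⟩ with hvdef
  have hv_apply : ∀ (x : X) (l : L), v x l = ψ (x, l.1) := fun x l => rfl
  -- pointwise sup bound
  have hkey : ∀ x x' : X, ∀ y : Y, |ψ (x, y) - ψ (x', y)| ≤ dist (v x) (v x') := by
    intro x x' y
    by_cases hy : y ∈ L
    · have := ContinuousMap.dist_apply_le_dist (f := v x) (g := v x') ⟨y, hy⟩
      rwa [hv_apply, hv_apply, Real.dist_eq] at this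
    · have h1 : ψ (x, y) = 0 := by by_contra hne; exact hy (hmemL x y hne)
      have h2 : ψ (x', y) = 0 := by by_contra hne; exact hy (hmemL x' y hne)
      simp [h1, h2, dist_nonneg]
  -- the x-support
  set K : Set X := Prod.fst '' tsupport ψ with hKdef
  have hv0 : ∀ x : X, x ∉ K → v x = 0 := by
    intro x hx
    ext l
    show ψ (x, l.1) = 0
    by_contra hne
    exact hx ⟨(x, l.1), subset_tsupport ψ hne, rfl⟩
  -- choose a compact set W whose image under v contains the range of v
  obtain ⟨x₀, hx₀⟩ : ∃ x₀ : X, ∀ x : X, x ∉ K → v x = v x₀ := by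
    by_cases hex : ∃ x : X, x ∉ K
    · obtain ⟨x₀, hx₀⟩ := hex
      exact ⟨x₀, fun x hx => by rw [hv0 x hx, hv0 x₀ hx₀]⟩
    · push_neg at hex
      exact ⟨Classical.arbitrary X, fun x hx => absurd (hex x) hx⟩
  have hKcomp : IsCompact K := hψc.image continuous_fst
  have hWcomp : IsCompact (insert x₀ K) := hKcomp.insert x₀
  have hrange : ∀ x : X, v x ∈ v '' insert x₀ K := by
    intro x
    by_cases hx : x ∈ K
    · exact ⟨x, Set.mem_insert_of_mem _ hx, rfl⟩
    · exact ⟨x₀, Set.mem_insert _ _, (hx₀ x hx).symm⟩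
  -- countable dense subset of the (compact) image
  obtain ⟨t, hts, htc, htd⟩ :=
    EMetric.subset_countable_closure_of_compact (hWcomp.image v.continuous)
  have htne : t.Nonempty := by
    rcases Set.eq_empty_or_nonempty t with h | h
    · exfalso
      have := htd (hrange x₀)
      rw [h, closure_empty] at this
      exact this
    · exact h
  obtain ⟨τ, hτ⟩ := htc.exists_eq_range htne
  have hτmem : ∀ n : ℕ, ∃ x : X, v x = τ n := by
    intro n
    have : τ n ∈ t := hτ ▸ Set.mem_range_self n
    obtain ⟨x, _, hx⟩ := hts this
    exact ⟨x, hx⟩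
  choose e he using hτmem
  -- density of the sequence (v (e n))
  have hdense : ∀ (x : X) (m : ℕ), ∃ n : ℕ, dist (v x) (v (e n)) < 1 / (m + 1) := by
    intro x m
    have hx : v x ∈ closure t := htd (hrange x)
    have hpos : (0 : ℝ) < 1 / (m + 1) := by positivity
    obtain ⟨b, hbt, hbd⟩ := Metric.mem_closure_iff.mp hx _ hpos
    obtain ⟨n, rfl⟩ := hτ ▸ hbt
    exact ⟨n, by rwa [he n]⟩
  -- the approximating functions
  set G : ℕ → X → ℝ := fun m x =>
    ∫ y, ψ (e (Nat.find (hdense x m)), y) ∂(f' x).1 with hGdef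
  have hGmeas : ∀ m : ℕ, Measurable (G m) := by
    intro m
    apply Measurable.find
      (f := fun n x => ∫ y, ψ (e n, y) ∂(f' x).1)
      (p := fun n x => dist (v x) (v (e n)) < 1 / (m + 1))
    · intro n
      exact (probRadon_continuous_eval _ (hcont (e n)) (hcomp (e n))).measurable.comp hf'meas
    · intro n
      exact (isOpen_lt (v.continuous.dist continuous_const) continuous_const).measurableSet
  -- the uniform bound
  have hbound : ∀ (m : ℕ) (x : X),
      dist (G m x) (∫ y, ψ (x, y) ∂(f' x).1) ≤ 1 / (m + 1) := by
    intro m x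
    haveI : IsProbabilityMeasure (f' x).1 := (f' x).2.1
    set n := Nat.find (hdense x m) with hn
    have hfind : dist (v x) (v (e n)) < 1 / (m + 1) := Nat.find_spec (hdense x m)
    have int1 : Integrable (fun y => ψ (e n, y)) (f' x).1 :=
      (hcont (e n)).integrable_of_hasCompactSupport (hcomp (e n))
    have int2 : Integrable (fun y => ψ (x, y)) (f' x).1 :=
      (hcont x).integrable_of_hasCompactSupport (hcomp x)
    rw [Real.dist_eq]
    show |(∫ y, ψ (e n, y) ∂(f' x).1) - ∫ y, ψ (x, y) ∂(f' x).1| ≤ 1 / (m + 1)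
    rw [← integral_sub int1 int2, ← Real.norm_eq_abs]
    calc ‖∫ y, (ψ (e n, y) - ψ (x, y)) ∂(f' x).1‖
        ≤ dist (v x) (v (e n)) * ((f' x).1 Set.univ).toReal := by
          apply norm_integral_le_of_norm_le_const
          filter_upwards with y
          have := hkey (e n) x y
          rwa [dist_comm, Real.norm_eq_abs]
      _ ≤ 1 / (m + 1) := by
          rw [measure_univ]
          simpa using hfind.le
  -- pass to the limit
  have hlim : ∀ x : X,
      Filter.Tendsto (fun m => G m x) Filter.atTop (𝓝 (∫ y, ψ (x, y) ∂(f' x).1)) := by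
    intro x
    rw [tendsto_iff_dist_tendsto_zero]
    apply squeeze_zero (fun m => dist_nonneg) (fun m => hbound m x)
    exact tendsto_one_div_add_atTop_nhds_zero_nat
  exact measurable_of_tendsto_metrizable hGmeas (tendsto_pi_nhds.mpr hlim)

end
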